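/- Let k be a field of characteristic ≠ 2, and let r = 2m - 1 be an odd natural number with m ≥ 1. Consider the k-algebra homomorphism ι : k[[x,y]]/(y² - x^{r+1}) → k[[t]] ⊕ k[[t]] defined by x ↦ (t, t) and y ↦ (t^m, -t^m). Then ι is injective, and its image is exactly the set of pairs (f, g) ∈ k[[t]] ⊕ k[[t]] such that f ≡ g modulo t^m. -/

import Mathlib

namespace Stmt7Aux

noncomputable section

open Finset

variable {k : Type*} [Field k]

/-- encode a pair of naturals as an exponent finsupp on `Fin 2`. -/
def e (p : ℕ × ℕ) : Fin 2 →₀ ℕ := Finsupp.single 0 p.1 + Finsupp.single 1 p.2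

lemma e_zero (p : ℕ × ℕ) : e p 0 = p.1 := by
  simp [e, Finsupp.single_apply]

lemma e_one (p : ℕ × ℕ) : e p 1 = p.2 := by
  simp [e, Finsupp.single_apply]

lemma e_decomp (d : Fin 2 →₀ ℕ) : e (d 0, d 1) = d := by
  ext i
  fin_cases i
  · simpa using e_zero (d 0, d 1)
  · simpa using e_one (d 0, d 1)

lemma e_inj : Function.Injective (e : ℕ × ℕ → (Fin 2 →₀ ℕ)) := by
  intro p q h
  have h0 : e p 0 = e q 0 := by rw [h]
  have h1 : e p 1 = e q 1 := by rw [h]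
  rw [e_zero, e_zero] at h0
  rw [e_one, e_one] at h1
  exact Prod.ext h0 h1

lemma e_add (p q : ℕ × ℕ) : e (p.1 + q.1, p.2 + q.2) = e p + e q := by
  simp only [e, Finsupp.single_add]
  abel

/-- index set for the coefficient of `t^n`. -/
def D (m n : ℕ) : Finset (ℕ × ℕ) :=
  (Finset.range (n + 1) ×ˢ Finset.range (n + 1)).filter (fun p => p.1 + m * p.2 = n)

lemma mem_D {m : ℕ} (hm : 1 ≤ m) {n : ℕ} {p : ℕ × ℕ} :
    p ∈ D m n ↔ p.1 + m * p.2 = n := by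
  simp only [D, Finset.mem_filter, Finset.mem_product, Finset.mem_range]
  constructor
  · exact fun h => h.2
  · intro h
    have h2 : p.2 ≤ m * p.2 := Nat.le_mul_of_pos_left p.2 hm
    exact ⟨⟨by omega, by omega⟩, h⟩

/-- the underlying function of the substitution map `x ↦ t, y ↦ ε t^m`. -/
def phiFun (ε : k) (m : ℕ) (f : MvPowerSeries (Fin 2) k) : PowerSeries k :=
  PowerSeries.mk fun n => ∑ p ∈ D m n, ε ^ p.2 * MvPowerSeries.coeff (e p) f

lemma coeff_phiFun (ε : k) (m : ℕ) (f : MvPowerSeries (Fin 2) k) (n : ℕ) :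
    PowerSeries.coeff n (phiFun ε m f) =
      ∑ p ∈ D m n, ε ^ p.2 * MvPowerSeries.coeff (e p) f :=
  PowerSeries.coeff_mk _ _

lemma phiFun_monomial {m : ℕ} (hm : 1 ≤ m) (ε : k) (d : Fin 2 →₀ ℕ) (a : k) :
    phiFun ε m (MvPowerSeries.monomial d a) =
      PowerSeries.monomial (d 0 + m * d 1) (ε ^ (d 1) * a) := by
  ext n
  rw [coeff_phiFun, PowerSeries.coeff_monomial]
  have step : ∀ p ∈ D m n, ε ^ p.2 * MvPowerSeries.coeff (e p) (MvPowerSeries.monomial d a)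
      = if p = (d 0, d 1) then (fun _ : ℕ × ℕ => ε ^ (d 1) * a) p else 0 := by
    intro p hp
    rw [MvPowerSeries.coeff_monomial]
    by_cases h : p = (d 0, d 1)
    · subst h
      rw [if_pos (e_decomp d), if_pos rfl]
    · rw [if_neg, if_neg h, mul_zero]
      intro hc
      exact h (e_inj (by rw [hc, e_decomp]))
  rw [Finset.sum_congr rfl step, Finset.sum_ite_eq' (D m n) (d 0, d 1)]
  by_cases hn : d 0 + m * d 1 = n
  · rw [if_pos, if_pos hn.symm]
    exact (mem_D hm).mpr hn
  · rw [if_neg, if_neg (fun h => hn h.symm)]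
    intro hmem
    exact hn ((mem_D hm).mp hmem)

lemma phiFun_one {m : ℕ} (hm : 1 ≤ m) (ε : k) : phiFun ε m (1 : MvPowerSeries (Fin 2) k) = 1 := by
  rw [← MvPowerSeries.monomial_zero_one, phiFun_monomial hm]
  simp

lemma phiFun_mul {m : ℕ} (hm : 1 ≤ m) (ε : k) (f g : MvPowerSeries (Fin 2) k) :
    phiFun ε m (f * g) = phiFun ε m f * phiFun ε m g := by
  classical
  ext n
  rw [PowerSeries.coeff_mul, coeff_phiFun]
  have lhs1 : ∑ p ∈ D m n, ε ^ p.2 * MvPowerSeries.coeff (e p) (f * g)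
      = ∑ p ∈ D m n, ∑ uv ∈ Finset.HasAntidiagonal.antidiagonal (e p),
          ε ^ p.2 * (MvPowerSeries.coeff uv.1 f * MvPowerSeries.coeff uv.2 g) := by
    refine Finset.sum_congr rfl fun p _ => ?_
    rw [MvPowerSeries.coeff_mul, Finset.mul_sum]
  rw [lhs1, Finset.sum_sigma' (D m n) (fun p => Finset.HasAntidiagonal.antidiagonal (e p))
      (fun p uv => ε ^ p.2 * (MvPowerSeries.coeff uv.1 f * MvPowerSeries.coeff uv.2 g))]
  have rhs1 : ∑ ij ∈ Finset.HasAntidiagonal.antidiagonal n,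
        PowerSeries.coeff ij.1 (phiFun ε m f) * PowerSeries.coeff ij.2 (phiFun ε m g)
      = ∑ ij ∈ Finset.HasAntidiagonal.antidiagonal n, ∑ pq ∈ D m ij.1 ×ˢ D m ij.2,
          (ε ^ pq.1.2 * MvPowerSeries.coeff (e pq.1) f) *
            (ε ^ pq.2.2 * MvPowerSeries.coeff (e pq.2) g) := by
    refine Finset.sum_congr rfl fun ij _ => ?_
    rw [coeff_phiFun, coeff_phiFun, Finset.sum_mul_sum, Finset.sum_product]
  rw [rhs1, Finset.sum_sigma' (Finset.HasAntidiagonal.antidiagonal n) (fun ij => D m ij.1 ×ˢ D m ij.2)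
      (fun _ pq => (ε ^ pq.1.2 * MvPowerSeries.coeff (e pq.1) f) *
        (ε ^ pq.2.2 * MvPowerSeries.coeff (e pq.2) g))]
  refine Finset.sum_bij'
    (fun x _ => ⟨(x.2.1 0 + m * x.2.1 1, x.2.2 0 + m * x.2.2 1),
      ((x.2.1 0, x.2.1 1), (x.2.2 0, x.2.2 1))⟩)
    (fun y _ => ⟨(y.2.1.1 + y.2.2.1, y.2.1.2 + y.2.2.2), (e y.2.1, e y.2.2)⟩)
    ?_ ?_ ?_ ?_ ?_
  · rintro ⟨p, u, v⟩ hx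
    rw [Finset.mem_sigma] at hx
    dsimp only at hx
    obtain ⟨hp, huv⟩ := hx
    have hsum : u + v = e p := Finset.HasAntidiagonal.mem_antidiagonal.mp huv
    have h0 : u 0 + v 0 = p.1 := by
      have := congrArg (fun d : Fin 2 →₀ ℕ => d 0) hsum
      simpa [e_zero] using this
    have h1 : u 1 + v 1 = p.2 := by
      have := congrArg (fun d : Fin 2 →₀ ℕ => d 1) hsum
      simpa [e_one] using this
    have hpn : p.1 + m * p.2 = n := (mem_D hm).mp hp
    dsimp only
    rw [Finset.mem_sigma]
    constructor
    · rw [Finset.HasAntidiagonal.mem_antidiagonal]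
      have hmul : m * p.2 = m * u 1 + m * v 1 := by rw [← h1]; exact Nat.mul_add m _ _
      dsimp only
      omega
    · rw [Finset.mem_product]
      exact ⟨(mem_D hm).mpr rfl, (mem_D hm).mpr rfl⟩
  · rintro ⟨ij, p, q⟩ hy
    rw [Finset.mem_sigma, Finset.mem_product] at hy
    dsimp only at hy
    obtain ⟨hij, hp, hq⟩ := hy
    dsimp only
    rw [Finset.mem_sigma]
    constructor
    · apply (mem_D hm).mpr
      have hp' := (mem_D hm).mp hp
      have hq' := (mem_D hm).mp hq
      have hijn : ij.1 + ij.2 = n := Finset.HasAntidiagonal.mem_antidiagonal.mp hij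
      have hmul : m * (p.2 + q.2) = m * p.2 + m * q.2 := Nat.mul_add m _ _
      dsimp only
      omega
    · rw [Finset.HasAntidiagonal.mem_antidiagonal]
      exact (e_add p q).symm
  · rintro ⟨p, u, v⟩ hx
    rw [Finset.mem_sigma] at hx
    dsimp only at hx
    obtain ⟨hp, huv⟩ := hx
    have hsum : u + v = e p := Finset.HasAntidiagonal.mem_antidiagonal.mp huv
    have h0 : u 0 + v 0 = p.1 := by
      have := congrArg (fun d : Fin 2 →₀ ℕ => d 0) hsum
      simpa [e_zero] using this
    have h1 : u 1 + v 1 = p.2 := by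
      have := congrArg (fun d : Fin 2 →₀ ℕ => d 1) hsum
      simpa [e_one] using this
    have hP : ((u 0 + v 0, u 1 + v 1) : ℕ × ℕ) = p := Prod.ext h0 h1
    dsimp only
    simp only [e_decomp]
    rw [Sigma.mk.inj_iff]
    exact ⟨hP, HEq.rfl⟩
  · rintro ⟨ij, p, q⟩ hy
    rw [Finset.mem_sigma, Finset.mem_product] at hy
    dsimp only at hy
    obtain ⟨hij, hp, hq⟩ := hy
    have hp' := (mem_D hm).mp hp
    have hq' := (mem_D hm).mp hq
    dsimp only
    simp only [e_zero, e_one]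
    rw [Sigma.mk.inj_iff]
    refine ⟨Prod.ext hp' hq', heq_of_eq ?_⟩
    simp
  · rintro ⟨p, u, v⟩ hx
    rw [Finset.mem_sigma] at hx
    dsimp only at hx
    obtain ⟨hp, huv⟩ := hx
    have hsum : u + v = e p := Finset.HasAntidiagonal.mem_antidiagonal.mp huv
    have h1 : u 1 + v 1 = p.2 := by
      have := congrArg (fun d : Fin 2 →₀ ℕ => d 1) hsum
      simpa [e_one] using this
    dsimp only
    simp only [e_decomp]
    rw [← h1, pow_add]
    ring

/-- the substitution algebra homomorphism. -/
def phi (ε : k) (m : ℕ) (hm : 1 ≤ m) : MvPowerSeries (Fin 2) k →ₐ[k] PowerSeries k where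
  toFun := phiFun ε m
  map_one' := phiFun_one hm ε
  map_mul' := phiFun_mul hm ε
  map_zero' := by
    ext n
    simp [coeff_phiFun]
  map_add' := by
    intro f g
    ext n
    simp [coeff_phiFun, mul_add, Finset.sum_add_distrib]
  commutes' := by
    intro a
    show phiFun ε m _ = _
    rw [MvPowerSeries.algebraMap_apply, PowerSeries.algebraMap_apply]
    simp only [Algebra.algebraMap_self, RingHom.id_apply]
    have : (MvPowerSeries.C a : MvPowerSeries (Fin 2) k) = MvPowerSeries.monomial 0 a := rfl
    rw [this, phiFun_monomial hm]
    simp only [Finsupp.coe_zero, Pi.zero_apply, pow_zero, one_mul, mul_zero, add_zero]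
    exact PowerSeries.monomial_zero_eq_C_apply a

lemma phi_apply (ε : k) (m : ℕ) (hm : 1 ≤ m) (f : MvPowerSeries (Fin 2) k) :
    phi ε m hm f = phiFun ε m f := rfl

lemma phi_g {m : ℕ} (hm : 1 ≤ m) (ε : k) (hε : ε ^ 2 = 1) :
    phi ε m hm ((MvPowerSeries.X 1 : MvPowerSeries (Fin 2) k) ^ 2 -
      (MvPowerSeries.X 0) ^ (2 * m)) = 0 := by
  rw [map_sub, MvPowerSeries.X_pow_eq, MvPowerSeries.X_pow_eq, phi_apply, phi_apply,
    phiFun_monomial hm, phiFun_monomial hm]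
  rw [show (Finsupp.single (1 : Fin 2) 2) 0 = 0 from Finsupp.single_eq_of_ne (by decide),
    show (Finsupp.single (1 : Fin 2) 2) 1 = 2 from Finsupp.single_eq_same,
    show (Finsupp.single (0 : Fin 2) (2 * m)) 0 = 2 * m from Finsupp.single_eq_same,
    show (Finsupp.single (0 : Fin 2) (2 * m)) 1 = 0 from Finsupp.single_eq_of_ne (by decide)]
  rw [hε]
  simp [two_mul, mul_comm]

/-- partial sums used in division by `y^2 - x^(2m)`. -/
def T (m : ℕ) (f : MvPowerSeries (Fin 2) k) (j i : ℕ) : k :=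
  ∑ s ∈ Finset.range (i + 1),
    if 2 * m * s ≤ i then MvPowerSeries.coeff (e (i - 2 * m * s, j + 2 * s)) f else 0

lemma T_key {m : ℕ} (hm : 1 ≤ m) (f : MvPowerSeries (Fin 2) k) (j i : ℕ) :
    T m f j i = MvPowerSeries.coeff (e (i, j)) f +
      (if 2 * m ≤ i then T m f (j + 2) (i - 2 * m) else 0) := by
  rw [T, Finset.sum_range_succ', add_comm]
  congr 1
  by_cases h2m : 2 * m ≤ i
  · rw [if_pos h2m, T]
    have hsub1 : Finset.range i ⊆ Finset.range (i + 1) := Finset.range_subset_range.mpr (by omega)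
    have hsub2 : Finset.range (i - 2 * m + 1) ⊆ Finset.range (i + 1) :=
      Finset.range_subset_range.mpr (by omega)
    rw [Finset.sum_subset hsub1 ?h1, Finset.sum_subset hsub2 ?h2]
    case h1 =>
      intro x _ hx
      rw [Finset.mem_range, not_lt] at hx
      rw [if_neg]
      have hq : 2 * (x + 1) ≤ 2 * m * (x + 1) := Nat.mul_le_mul_right _ (by omega)
      omega
    case h2 =>
      intro x _ hx
      rw [Finset.mem_range, not_lt] at hx
      rw [if_neg]
      have hq : x ≤ 2 * m * x := Nat.le_mul_of_pos_left x (by omega)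
      omega
    refine Finset.sum_congr rfl fun s _ => ?_
    have hms : 2 * m * (s + 1) = 2 * m * s + 2 * m := by ring
    have hcond : 2 * m * (s + 1) ≤ i ↔ 2 * m * s ≤ i - 2 * m := by omega
    by_cases hc : 2 * m * s ≤ i - 2 * m
    · rw [if_pos (hcond.mpr hc), if_pos hc]
      have harg : ((i - 2 * m * (s + 1), j + 2 * (s + 1)) : ℕ × ℕ)
          = (i - 2 * m - 2 * m * s, j + 2 + 2 * s) := by
        rw [Prod.mk.injEq]
        constructor <;> omega
      rw [harg]
    · rw [if_neg (fun hh => hc (hcond.mp hh)), if_neg hc]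
  · rw [if_neg h2m]
    refine Finset.sum_eq_zero fun x _ => ?_
    rw [if_neg]
    have hq : 2 * m ≤ 2 * m * (x + 1) := Nat.le_mul_of_pos_right _ (by omega)
    omega

def Qf (m : ℕ) (f : MvPowerSeries (Fin 2) k) : MvPowerSeries (Fin 2) k :=
  fun d => T m f (d 1 + 2) (d 0)

def af (m : ℕ) (f : MvPowerSeries (Fin 2) k) : PowerSeries k :=
  PowerSeries.mk fun i => T m f 0 i

def bf (m : ℕ) (f : MvPowerSeries (Fin 2) k) : PowerSeries k :=
  PowerSeries.mk fun i => T m f 1 i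

/-- remainder `a(x) + y b(x)` as a power series in two variables. -/
def N (a b : PowerSeries k) : MvPowerSeries (Fin 2) k :=
  fun d => if d 1 = 0 then PowerSeries.coeff (d 0) a
    else if d 1 = 1 then PowerSeries.coeff (d 0) b else 0

lemma division {m : ℕ} (hm : 1 ≤ m) (f : MvPowerSeries (Fin 2) k) :
    f = N (af m f) (bf m f) +
      ((MvPowerSeries.X 1 : MvPowerSeries (Fin 2) k) ^ 2 -
        (MvPowerSeries.X 0) ^ (2 * m)) * Qf m f := by
  ext d
  rw [map_add, sub_mul, map_sub, MvPowerSeries.X_pow_eq, MvPowerSeries.X_pow_eq,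
    MvPowerSeries.coeff_monomial_mul, MvPowerSeries.coeff_monomial_mul]
  simp only [MvPowerSeries.coeff_apply, one_mul]
  have hle1 : (Finsupp.single (1 : Fin 2) 2 ≤ d) ↔ 2 ≤ d 1 := Finsupp.single_le_iff
  have hle0 : (Finsupp.single (0 : Fin 2) (2 * m) ≤ d) ↔ 2 * m ≤ d 0 := Finsupp.single_le_iff
  have hQ1 : Qf m f (d - Finsupp.single (1 : Fin 2) 2) = T m f ((d 1 - 2) + 2) (d 0) := by
    simp only [Qf]
    rw [Finsupp.tsub_apply, Finsupp.tsub_apply,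
      Finsupp.single_eq_same,
      Finsupp.single_eq_of_ne' (by decide : (1 : Fin 2) ≠ 0), Nat.sub_zero]
  have hQ0 : Qf m f (d - Finsupp.single (0 : Fin 2) (2 * m)) = T m f (d 1 + 2) (d 0 - 2 * m) := by
    simp only [Qf]
    rw [Finsupp.tsub_apply, Finsupp.tsub_apply,
      Finsupp.single_eq_same,
      Finsupp.single_eq_of_ne' (by decide : (0 : Fin 2) ≠ 1), Nat.sub_zero]
  have hfd : f d = MvPowerSeries.coeff (e (d 0, d 1)) f := by rw [e_decomp]; rfl
  rw [hQ1, hQ0, hfd]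
  simp only [N]
  by_cases h0 : d 1 = 0
  · rw [if_pos h0, if_neg (by rw [hle1, h0]; omega), h0]
    show MvPowerSeries.coeff (e (d 0, 0)) f
        = PowerSeries.coeff (d 0) (af m f) + _
    rw [show PowerSeries.coeff (d 0) (af m f) = T m f 0 (d 0) from PowerSeries.coeff_mk _ _,
      T_key hm f 0 (d 0)]
    simp only [hle0]
    ring
  · by_cases h1 : d 1 = 1
    · rw [if_neg h0, if_pos h1, if_neg (by rw [hle1, h1]; omega), h1]
      show MvPowerSeries.coeff (e (d 0, 1)) f
          = PowerSeries.coeff (d 0) (bf m f) + _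
      rw [show PowerSeries.coeff (d 0) (bf m f) = T m f 1 (d 0) from PowerSeries.coeff_mk _ _,
        T_key hm f 1 (d 0)]
      simp only [hle0]
      ring
    · have h2 : 2 ≤ d 1 := by omega
      rw [if_neg h0, if_neg h1, if_pos (hle1.mpr h2),
        show d 1 - 2 + 2 = d 1 from by omega, T_key hm f (d 1) (d 0)]
      simp only [hle0]
      ring

lemma phiFun_N {m : ℕ} (hm : 1 ≤ m) (ε : k) (a b : PowerSeries k) :
    phiFun ε m (N a b) = a + PowerSeries.C ε * (PowerSeries.X ^ m * b) := by
  ext n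
  rw [map_add, PowerSeries.coeff_C_mul, PowerSeries.coeff_X_pow_mul', coeff_phiFun,
    mul_ite, mul_zero]
  have step : ∀ p ∈ D m n, ε ^ p.2 * MvPowerSeries.coeff (e p) (N a b)
      = (if p = ((n, 0) : ℕ × ℕ) then (fun q : ℕ × ℕ => PowerSeries.coeff q.1 a) p else 0)
        + (if p = ((n - m, 1) : ℕ × ℕ) then
            (fun q : ℕ × ℕ => ε * PowerSeries.coeff q.1 b) p else 0) := by
    intro p hp
    have hp' := (mem_D hm).mp hp
    have hNe : MvPowerSeries.coeff (e p) (N a b)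
        = if p.2 = 0 then PowerSeries.coeff p.1 a
          else if p.2 = 1 then PowerSeries.coeff p.1 b else 0 := by
      simp only [MvPowerSeries.coeff_apply, N, e_zero, e_one]
    rw [hNe]
    by_cases hz : p.2 = 0
    · have hp1 : p = ((n, 0) : ℕ × ℕ) := by
        have : p.1 = n := by rw [hz] at hp'; simpa using hp'
        exact Prod.ext this hz
      subst hp1
      simp
    · by_cases ho : p.2 = 1
      · have hp1 : p = ((n - m, 1) : ℕ × ℕ) := by
          rw [ho, mul_one] at hp'
          exact Prod.ext (by omega) ho
        subst hp1
        simp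
      · rw [if_neg hz, if_neg ho, mul_zero,
          if_neg (by rintro rfl; exact hz rfl), if_neg (by rintro rfl; exact ho rfl), add_zero]
  rw [Finset.sum_congr rfl step, Finset.sum_add_distrib,
    Finset.sum_ite_eq' (D m n) ((n, 0) : ℕ × ℕ),
    Finset.sum_ite_eq' (D m n) ((n - m, 1) : ℕ × ℕ)]
  have hmem1 : ((n, 0) : ℕ × ℕ) ∈ D m n := (mem_D hm).mpr (by simp)
  rw [if_pos hmem1]
  by_cases hc : m ≤ n
  · have hmem2 : ((n - m, 1) : ℕ × ℕ) ∈ D m n := (mem_D hm).mpr (by simp; omega)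
    rw [if_pos hmem2, if_pos hc]
  · rw [if_neg (fun hmem => hc (by have := (mem_D hm).mp hmem; simp at this; omega)),
      if_neg hc, add_zero]

lemma phi_div {m : ℕ} (hm : 1 ≤ m) (ε : k) (hε : ε ^ 2 = 1) (f : MvPowerSeries (Fin 2) k) :
    phi ε m hm f = af m f + PowerSeries.C ε * (PowerSeries.X ^ m * bf m f) := by
  conv_lhs => rw [division hm f]
  rw [map_add, map_mul, phi_g hm ε hε, zero_mul, add_zero, phi_apply, phiFun_N hm]

def Phi (m : ℕ) (hm : 1 ≤ m) : MvPowerSeries (Fin 2) k →ₐ[k] PowerSeries k × PowerSeries k :=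
  (phi (1 : k) m hm).prod (phi (-1 : k) m hm)

lemma Phi_fst {m : ℕ} (hm : 1 ≤ m) (f : MvPowerSeries (Fin 2) k) :
    (Phi m hm f).1 = phi (1 : k) m hm f := rfl

lemma Phi_snd {m : ℕ} (hm : 1 ≤ m) (f : MvPowerSeries (Fin 2) k) :
    (Phi m hm f).2 = phi (-1 : k) m hm f := rfl

lemma Phi_g {m : ℕ} (hm : 1 ≤ m) :
    Phi (k := k) m hm ((MvPowerSeries.X 1 : MvPowerSeries (Fin 2) k) ^ 2 -
      (MvPowerSeries.X 0) ^ (2 * m)) = 0 := by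
  have h1 := phi_g (k := k) hm 1 (by norm_num)
  have h2 := phi_g (k := k) hm (-1) (by norm_num)
  refine Prod.ext ?_ ?_
  · rw [Phi_fst hm, h1]; rfl
  · rw [Phi_snd hm, h2]; rfl

end

end Stmt7Aux

theorem stmt_7 {k : Type*} [Field k] (h2 : (2 : k) ≠ 0) (m : ℕ) (hm : 1 ≤ m)
    (r : ℕ) (hr : r = 2 * m - 1)
    (I : Ideal (MvPowerSeries (Fin 2) k))
    (hI : I = Ideal.span {(MvPowerSeries.X 1 : MvPowerSeries (Fin 2) k) ^ 2 -
      (MvPowerSeries.X 0 : MvPowerSeries (Fin 2) k) ^ (r + 1)}) :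
    ∃ ι : (MvPowerSeries (Fin 2) k ⧸ I) →ₐ[k] (PowerSeries k × PowerSeries k),
      (∀ (f : MvPowerSeries (Fin 2) k) (n : ℕ),
        (PowerSeries.coeff n (ι (Ideal.Quotient.mk I f)).1 =
          ∑ p ∈ (Finset.range (n + 1) ×ˢ Finset.range (n + 1)).filter
              (fun p => p.1 + m * p.2 = n),
            MvPowerSeries.coeff
              (Finsupp.single (0 : Fin 2) p.1 + Finsupp.single 1 p.2) f) ∧
        (PowerSeries.coeff n (ι (Ideal.Quotient.mk I f)).2 =
          ∑ p ∈ (Finset.range (n + 1) ×ˢ Finset.range (n + 1)).filter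
              (fun p => p.1 + m * p.2 = n),
            (-1 : k) ^ p.2 *
              MvPowerSeries.coeff
                (Finsupp.single (0 : Fin 2) p.1 + Finsupp.single 1 p.2) f)) ∧
      Function.Injective ι ∧
      Set.range ι = {fg : PowerSeries k × PowerSeries k |
        fg.1 - fg.2 ∈ Ideal.span {(PowerSeries.X : PowerSeries k) ^ m}} := by
  have h2m : r + 1 = 2 * m := by omega
  have hIg : I = Ideal.span {(MvPowerSeries.X 1 : MvPowerSeries (Fin 2) k) ^ 2 -
      (MvPowerSeries.X 0 : MvPowerSeries (Fin 2) k) ^ (2 * m)} := by rw [hI, h2m]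
  have hann : ∀ a ∈ I, Stmt7Aux.Phi (k := k) m hm a = 0 := by
    intro x hx
    rw [hIg, Ideal.mem_span_singleton] at hx
    obtain ⟨c, rfl⟩ := hx
    rw [map_mul, Stmt7Aux.Phi_g hm, zero_mul]
  have hcomp : ∀ f : MvPowerSeries (Fin 2) k,
      (Ideal.Quotient.liftₐ I (Stmt7Aux.Phi m hm) hann) (Ideal.Quotient.mk I f)
        = Stmt7Aux.Phi m hm f := fun f => by
    rw [Ideal.Quotient.liftₐ_apply]
    rfl
  have h2ne : (2 : PowerSeries k) ≠ 0 := fun hcon =>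
    h2 (by have := congrArg (PowerSeries.constantCoeff) hcon; rwa [map_ofNat, map_zero] at this)
  have hC2 : (PowerSeries.C (2⁻¹ : k)) * 2 = 1 := by
    rw [show (2 : PowerSeries k) = PowerSeries.C 2 from (map_ofNat _ 2).symm,
      ← map_mul, inv_mul_cancel₀ h2, map_one]
  refine ⟨Ideal.Quotient.liftₐ I (Stmt7Aux.Phi m hm) hann, ?_, ?_, ?_⟩
  · intro f n
    constructor
    · rw [hcomp f]
      have h1 : (Stmt7Aux.Phi (k := k) m hm f).1 = Stmt7Aux.phiFun 1 m f :=
        Stmt7Aux.Phi_fst hm f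
      rw [h1, Stmt7Aux.coeff_phiFun]
      refine Finset.sum_congr rfl fun p _ => ?_
      rw [one_pow, one_mul]
      rfl
    · rw [hcomp f]
      have h1 : (Stmt7Aux.Phi (k := k) m hm f).2 = Stmt7Aux.phiFun (-1) m f :=
        Stmt7Aux.Phi_snd hm f
      rw [h1, Stmt7Aux.coeff_phiFun]
      rfl
  · rw [injective_iff_map_eq_zero]
    intro x hx
    obtain ⟨f, rfl⟩ := Ideal.Quotient.mk_surjective x
    rw [hcomp f] at hx
    have h1 : Stmt7Aux.phi (1 : k) m hm f = 0 := by
      rw [← Stmt7Aux.Phi_fst hm f, hx]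
      rfl
    have h2' : Stmt7Aux.phi (-1 : k) m hm f = 0 := by
      rw [← Stmt7Aux.Phi_snd hm f, hx]
      rfl
    rw [Stmt7Aux.phi_div hm 1 (by norm_num) f, map_one, one_mul] at h1
    rw [Stmt7Aux.phi_div hm (-1) (by norm_num) f, map_neg, map_one] at h2'
    have hA : Stmt7Aux.af m f = 0 := by
      have hh : (2 : PowerSeries k) * Stmt7Aux.af m f = 0 := by linear_combination h1 + h2'
      exact (mul_eq_zero.mp hh).resolve_left h2ne
    have hB : Stmt7Aux.bf m f = 0 := by
      have hX : (PowerSeries.X : PowerSeries k) ^ m ≠ 0 :=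
        pow_ne_zero _ PowerSeries.X_ne_zero
      have hh : (PowerSeries.X : PowerSeries k) ^ m * Stmt7Aux.bf m f = 0 := by
        linear_combination h1 - hA
      exact (mul_eq_zero.mp hh).resolve_left hX
    rw [Ideal.Quotient.eq_zero_iff_mem, hIg, Ideal.mem_span_singleton]
    refine ⟨Stmt7Aux.Qf m f, ?_⟩
    conv_lhs => rw [Stmt7Aux.division hm f]
    rw [hA, hB]
    have hN0 : Stmt7Aux.N (0 : PowerSeries k) 0 = 0 := by
      funext d
      show Stmt7Aux.N (0 : PowerSeries k) 0 d = 0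
      simp [Stmt7Aux.N]
    rw [hN0, zero_add]
  · ext fg
    rw [Set.mem_setOf_eq, Ideal.mem_span_singleton]
    constructor
    · rintro ⟨x, rfl⟩
      obtain ⟨f, rfl⟩ := Ideal.Quotient.mk_surjective x
      rw [hcomp f]
      refine ⟨2 * Stmt7Aux.bf m f, ?_⟩
      have h1 : (Stmt7Aux.Phi (k := k) m hm f).1
          = Stmt7Aux.af m f + PowerSeries.C 1 *
            (PowerSeries.X ^ m * Stmt7Aux.bf m f) := by
        rw [Stmt7Aux.Phi_fst hm f, Stmt7Aux.phi_div hm 1 (by norm_num) f]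
      have h2' : (Stmt7Aux.Phi (k := k) m hm f).2
          = Stmt7Aux.af m f + PowerSeries.C (-1) *
            (PowerSeries.X ^ m * Stmt7Aux.bf m f) := by
        rw [Stmt7Aux.Phi_snd hm f, Stmt7Aux.phi_div hm (-1) (by norm_num) f]
      rw [h1, h2', map_one, map_neg, map_one]
      ring
    · rintro ⟨h, hh⟩
      refine ⟨Ideal.Quotient.mk I (Stmt7Aux.N
        (PowerSeries.C (2⁻¹ : k) * (fg.1 + fg.2)) (PowerSeries.C (2⁻¹ : k) * h)), ?_⟩
      rw [hcomp]
      refine Prod.ext ?_ ?_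
      · rw [Stmt7Aux.Phi_fst hm, Stmt7Aux.phi_apply, Stmt7Aux.phiFun_N hm, map_one, one_mul]
        linear_combination (-(PowerSeries.C (2⁻¹ : k))) * hh + fg.1 * hC2
      · rw [Stmt7Aux.Phi_snd hm, Stmt7Aux.phi_apply, Stmt7Aux.phiFun_N hm, map_neg, map_one]
        linear_combination (PowerSeries.C (2⁻¹ : k)) * hh + fg.2 * hC2
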